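/- Least-squares coefficients for the transformed multiple regression: let n ≥ 4, let e₁ be the first standard basis vector of ℝⁿ, X̃ = (x₁, x₂, 0, …, 0) with x₂ > 0, M̃ = (m₁, m₂, m₃, 0, …, 0) with m₃ > 0, and Ỹ = (y₁, y₂, y₃, y₄, 0, …, 0). Then the (unique) minimizer (i, b, d) ∈ ℝ³ of ‖Ỹ − i·e₁ − b·M̃ − d·X̃‖² satisfies b = y₃/m₃ and d = (m₃y₂ − m₂y₃)/(x₂m₃). -/

import Mathlib

/-- Least-squares coefficients for the transformed multiple regression: for `n ≥ 4`,
`e₁ = (1,0,…,0)`, `X̃ = (x₁,x₂,0,…,0)` with `x₂ > 0`, `M̃ = (m₁,m₂,m₃,0,…,0)` with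
`m₃ > 0`, and `Ỹ = (y₁,y₂,y₃,y₄,0,…,0)`, every minimizer `(i, b, d)` of
`‖Ỹ − i·e₁ − b·M̃ − d·X̃‖²` satisfies `b = y₃/m₃` and `d = (m₃y₂ − m₂y₃)/(x₂m₃)`. -/
theorem lse_coefficients_transformed_multiple_regression
    (n : ℕ) (hn : 4 ≤ n) (x₁ x₂ m₁ m₂ m₃ y₁ y₂ y₃ y₄ : ℝ)
    (hx₂ : 0 < x₂) (hm₃ : 0 < m₃)
    (e₁ X M Y : Fin n → ℝ)
    (he₁ : e₁ = fun i => if i = (⟨0, by omega⟩ : Fin n) then (1 : ℝ) else 0)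
    (hX : X = fun i => if i = (⟨0, by omega⟩ : Fin n) then x₁
      else if i = (⟨1, by omega⟩ : Fin n) then x₂ else 0)
    (hM : M = fun i => if i = (⟨0, by omega⟩ : Fin n) then m₁
      else if i = (⟨1, by omega⟩ : Fin n) then m₂
      else if i = (⟨2, by omega⟩ : Fin n) then m₃ else 0)
    (hY : Y = fun i => if i = (⟨0, by omega⟩ : Fin n) then y₁
      else if i = (⟨1, by omega⟩ : Fin n) then y₂
      else if i = (⟨2, by omega⟩ : Fin n) then y₃
      else if i = (⟨3, by omega⟩ : Fin n) then y₄ else 0)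
    (i b d : ℝ)
    (hmin : ∀ i' b' d' : ℝ,
      ∑ j, (Y j - i * e₁ j - b * M j - d * X j) ^ 2 ≤
        ∑ j, (Y j - i' * e₁ j - b' * M j - d' * X j) ^ 2) :
    b = y₃ / m₃ ∧ d = (m₃ * y₂ - m₂ * y₃) / (x₂ * m₃) := by

  have key : ∀ i' b' d' : ℝ,
      ∑ j, (Y j - i' * e₁ j - b' * M j - d' * X j) ^ 2 =
        (y₁ - i' - b' * m₁ - d' * x₁) ^ 2 + (y₂ - b' * m₂ - d' * x₂) ^ 2 +
          (y₃ - b' * m₃) ^ 2 + y₄ ^ 2 := by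
    intro i' b' d'
    subst he₁ hX hM hY
    set k0 : Fin n := ⟨0, by omega⟩
    set k1 : Fin n := ⟨1, by omega⟩
    set k2 : Fin n := ⟨2, by omega⟩
    set k3 : Fin n := ⟨3, by omega⟩
    rw [← Finset.sum_subset (Finset.subset_univ ({k0, k1, k2, k3} : Finset (Fin n)))]
    · rw [show ({k0, k1, k2, k3} : Finset (Fin n)) = {k0, k1, k2, k3} from rfl]
      rw [Finset.sum_insert (by simp [k0, k1, k2, k3, Fin.ext_iff]),
          Finset.sum_insert (by simp [k1, k2, k3, Fin.ext_iff]),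
          Finset.sum_insert (by simp [k2, k3, Fin.ext_iff]),
          Finset.sum_singleton]
      simp only [k0, k1, k2, k3, Fin.ext_iff]
      norm_num
      ring
    · intro j _ hj
      simp only [Finset.mem_insert, Finset.mem_singleton, not_or] at hj
      obtain ⟨h0, h1, h2, h3⟩ := hj
      simp [h0, h1, h2, h3]
  have h1 := hmin (y₁ - (y₃ / m₃) * m₁ - ((m₃ * y₂ - m₂ * y₃) / (x₂ * m₃)) * x₁)
      (y₃ / m₃) ((m₃ * y₂ - m₂ * y₃) / (x₂ * m₃))
  rw [key, key] at h1
  have e2 : y₂ - (y₃ / m₃) * m₂ - ((m₃ * y₂ - m₂ * y₃) / (x₂ * m₃)) * x₂ = 0 := by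
    field_simp
    ring
  have e3 : y₃ - (y₃ / m₃) * m₃ = 0 := by field_simp; ring
  rw [e2, e3] at h1
  have hb : y₃ - b * m₃ = 0 := by nlinarith [sq_nonneg (y₁ - i - b * m₁ - d * x₁), sq_nonneg (y₂ - b * m₂ - d * x₂)]
  have hd : y₂ - b * m₂ - d * x₂ = 0 := by nlinarith [sq_nonneg (y₁ - i - b * m₁ - d * x₁)]
  constructor
  · field_simp
    linarith
  · field_simp
    linear_combination m₂ * hb - m₃ * hd
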